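/- Suppose K is self-adjoint and w* = (u₀*, p*) ∈ W is a saddle point, i.e., φ(u₀) − φ(u₀*) + ⟨w − w*, F(w*)⟩ ≥ 0 for all w ∈ W. If w̃^k = (ũ₀^k, p̃^k) ∈ W satisfies the prediction variational inequality φ(u₀) − φ(ũ₀^k) + ⟨w − w̃^k, F(w̃^k) + G(w̃^k − w^k)⟩ ≥ 0 for all w = (u₀, p) ∈ W, and w^{k+1} = w^k − D(w^k − w̃^k), then ‖w^{k+1} − w*‖²_K ≤ ‖w^k − w*‖²_K − ‖w^k − w̃^k‖²_N − 2‖p̃^k − p*‖² − 2τ‖ũ₀^k − u₀*‖². -/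

import Mathlib

open scoped InnerProductSpace RealInnerProductSpace

noncomputable section

/-- The product space `W = H × H` equipped with the Hilbert space structure
`⟨(u,p),(u',p')⟩ = ⟨u,u'⟩ + ⟨p,p'⟩`. -/
abbrev W (H : Type*) [NormedAddCommGroup H] [InnerProductSpace ℝ H] := WithLp 2 (H × H)

/-- The canonical (linear homeomorphism) identification of `W` with the plain product. -/
def eW (H : Type*) [NormedAddCommGroup H] [InnerProductSpace ℝ H] :
    W H ≃L[ℝ] H × H := WithLp.prodContinuousLinearEquiv 2 ℝ H H

variable {H : Type*} [NormedAddCommGroup H] [InnerProductSpace ℝ H] [CompleteSpace H]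

/-- The block diagonal operator `D(u,p) = (ρu, σp)` on `W`. -/
def opD (H : Type*) [NormedAddCommGroup H] [InnerProductSpace ℝ H] (ρ σ : ℝ) :
    W H →L[ℝ] W H :=
  ((eW H).symm.toContinuousLinearMap.comp
    ((ρ • ContinuousLinearMap.fst ℝ H H).prod (σ • ContinuousLinearMap.snd ℝ H H))).comp
    (eW H).toContinuousLinearMap

/-- The block operator `G(u,p) = ((1/r)u − ℒ*p, −θℒu + (1/s)p)` on `W`. -/
def opG (L : H →L[ℝ] H) (r s θ : ℝ) : W H →L[ℝ] W H :=
  ((eW H).symm.toContinuousLinearMap.comp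
    (((1 / r) • ContinuousLinearMap.fst ℝ H H
        - (ContinuousLinearMap.adjoint L).comp (ContinuousLinearMap.snd ℝ H H)).prod
      ((-θ) • (L.comp (ContinuousLinearMap.fst ℝ H H))
        + (1 / s) • ContinuousLinearMap.snd ℝ H H))).comp
    (eW H).toContinuousLinearMap

/-- The operator `K = G ∘ D⁻¹`. -/
def opK (L : H →L[ℝ] H) (r s θ ρ σ : ℝ) : W H →L[ℝ] W H :=
  (opG L r s θ).comp (opD H ρ⁻¹ σ⁻¹)

/-- The operator `N = G + G* − D* ∘ K ∘ D`. -/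
def opN (L : H →L[ℝ] H) (r s θ ρ σ : ℝ) : W H →L[ℝ] W H :=
  opG L r s θ + ContinuousLinearMap.adjoint (opG L r s θ)
    - ((ContinuousLinearMap.adjoint (opD H ρ σ)).comp
        ((opK L r s θ ρ σ).comp (opD H ρ σ)))

/-- The map `F(u₀, p) = (τu₀ + ℒ*p, p − ℒu₀ + u_T)` on `W`. -/
def Fmap (L : H →L[ℝ] H) (uT : H) (τ : ℝ) : W H → W H := fun w =>
  (eW H).symm (τ • ((eW H) w).1 + ContinuousLinearMap.adjoint L ((eW H) w).2,
               ((eW H) w).2 - L ((eW H) w).1 + uT)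

/-- `‖w‖²_A = ⟨Aw, w⟩` for an operator `A` on `W`. -/
def normSq (A : W H →L[ℝ] W H) (w : W H) : ℝ := ⟪A w, w⟫_ℝ

/-- A saddle point `w* = (u₀*, p*)`: `φ(u₀) − φ(u₀*) + ⟨w − w*, F(w*)⟩ ≥ 0` for all `w`. -/
def IsSaddle (L : H →L[ℝ] H) (uT : H) (τ : ℝ) (φ : H → ℝ) (wstar : W H) : Prop :=
  ∀ w : W H, φ ((eW H w).1) - φ ((eW H wstar).1)
      + ⟪w - wstar, Fmap L uT τ wstar⟫_ℝ ≥ 0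

/-- The prediction variational inequality satisfied by `w̃` given `wᵏ`:
`φ(u₀) − φ(ũ₀) + ⟨w − w̃, F(w̃) + G(w̃ − wᵏ)⟩ ≥ 0` for all `w`. -/
def PredVI (L : H →L[ℝ] H) (uT : H) (τ : ℝ) (φ : H → ℝ) (r s θ : ℝ)
    (wk wt : W H) : Prop :=
  ∀ w : W H, φ ((eW H w).1) - φ ((eW H wt).1)
      + ⟪w - wt, Fmap L uT τ wt + opG L r s θ (wt - wk)⟫_ℝ ≥ 0

end

section AuxLemmas

open ContinuousLinearMap in
set_option linter.unusedSectionVars false in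
section
variable {H : Type*} [NormedAddCommGroup H] [InnerProductSpace ℝ H] [CompleteSpace H]

lemma opD_adjoint (ρ σ : ℝ) : ContinuousLinearMap.adjoint (opD H ρ σ) = opD H ρ σ := by
  symm
  rw [ContinuousLinearMap.eq_adjoint_iff]
  intro x y
  show (⟪ρ • x.fst, y.fst⟫_ℝ + ⟪σ • x.snd, y.snd⟫_ℝ : ℝ)
      = ⟪x.fst, ρ • y.fst⟫_ℝ + ⟪x.snd, σ • y.snd⟫_ℝ
  simp [real_inner_smul_left, real_inner_smul_right]

lemma opD_inv_opD (ρ σ : ℝ) (hρ : ρ ≠ 0) (hσ : σ ≠ 0) (w : W H) :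
    opD H ρ⁻¹ σ⁻¹ (opD H ρ σ w) = w := by
  refine WithLp.ofLp_injective 2 (Prod.ext ?_ ?_)
  · show ρ⁻¹ • ρ • w.fst = w.fst
    rw [smul_smul, inv_mul_cancel₀ hρ, one_smul]
  · show σ⁻¹ • σ • w.snd = w.snd
    rw [smul_smul, inv_mul_cancel₀ hσ, one_smul]

lemma opK_opD (L : H →L[ℝ] H) (r s θ ρ σ : ℝ) (hρ : ρ ≠ 0) (hσ : σ ≠ 0) (w : W H) :
    opK L r s θ ρ σ (opD H ρ σ w) = opG L r s θ w := by
  show opG L r s θ (opD H ρ⁻¹ σ⁻¹ (opD H ρ σ w)) = opG L r s θ w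
  rw [opD_inv_opD ρ σ hρ hσ]

lemma F_diff_inner (L : H →L[ℝ] H) (uT : H) (τ : ℝ) (w w' : W H) :
    ⟪w - w', Fmap L uT τ w - Fmap L uT τ w'⟫_ℝ
      = τ * ‖w.fst - w'.fst‖ ^ 2 + ‖w.snd - w'.snd‖ ^ 2 := by
  have h1 : (τ • w.fst + ContinuousLinearMap.adjoint L w.snd)
      - (τ • w'.fst + ContinuousLinearMap.adjoint L w'.snd)
      = τ • (w.fst - w'.fst) + ContinuousLinearMap.adjoint L (w.snd - w'.snd) := by
    rw [smul_sub, map_sub]; abel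
  have h2 : (w.snd - L w.fst + uT) - (w'.snd - L w'.fst + uT)
      = (w.snd - w'.snd) - L (w.fst - w'.fst) := by
    rw [map_sub]; abel
  show ⟪w.fst - w'.fst, (τ • w.fst + ContinuousLinearMap.adjoint L w.snd)
          - (τ • w'.fst + ContinuousLinearMap.adjoint L w'.snd)⟫_ℝ
      + ⟪w.snd - w'.snd, (w.snd - L w.fst + uT) - (w'.snd - L w'.fst + uT)⟫_ℝ
      = τ * ‖w.fst - w'.fst‖ ^ 2 + ‖w.snd - w'.snd‖ ^ 2
  rw [h1, h2, inner_add_right, inner_sub_right, real_inner_smul_right,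
    ContinuousLinearMap.adjoint_inner_right, real_inner_self_eq_norm_sq,
    real_inner_self_eq_norm_sq, real_inner_comm (w.snd - w'.snd)]
  ring

/-- The abstract algebraic identity behind the contraction estimate. -/
lemma contraction_algebra (K G D N : W H →L[ℝ] W H)
    (hKD : ∀ w : W H, K (D w) = G w)
    (hN : N = G + ContinuousLinearMap.adjoint G
        - (ContinuousLinearMap.adjoint D).comp (K.comp D))
    (hKsym : ∀ x y : W H, ⟪K x, y⟫_ℝ = ⟪x, K y⟫_ℝ)
    (a e : W H) :
    normSq K (a - D e) = normSq K a - normSq N e - 2 * ⟪G e, a - e⟫_ℝ := by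
  have h1 : normSq N e = ⟪G e, e⟫_ℝ + ⟪e, G e⟫_ℝ - ⟪G e, D e⟫_ℝ := by
    rw [normSq, hN, ContinuousLinearMap.sub_apply, ContinuousLinearMap.add_apply,
      inner_sub_left, inner_add_left, ContinuousLinearMap.adjoint_inner_left,
      ContinuousLinearMap.comp_apply, ContinuousLinearMap.comp_apply, hKD,
      ContinuousLinearMap.adjoint_inner_left]
  have h2 : normSq K (a - D e)
      = ⟪K a, a⟫_ℝ - ⟪a, G e⟫_ℝ - (⟪G e, a⟫_ℝ - ⟪G e, D e⟫_ℝ) := by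
    rw [normSq, map_sub, inner_sub_left, hKD, inner_sub_right, inner_sub_right,
      hKsym a (D e), hKD]
  rw [h2, h1, inner_sub_right, normSq, real_inner_comm a (G e), real_inner_comm e (G e)]
  ring

end
end AuxLemmas

/-- Contraction estimate: if `K` is self-adjoint, `w*` is a saddle point, `w̃ᵏ` satisfies the
prediction VI and `wᵏ⁺¹ = wᵏ − D(wᵏ − w̃ᵏ)`, then
`‖wᵏ⁺¹ − w*‖²_K ≤ ‖wᵏ − w*‖²_K − ‖wᵏ − w̃ᵏ‖²_N − 2‖p̃ᵏ − p*‖² − 2τ‖ũ₀ᵏ − u₀*‖²`. -/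
theorem contraction_estimate
    {H : Type*} [NormedAddCommGroup H] [InnerProductSpace ℝ H] [CompleteSpace H]
    (L : H →L[ℝ] H) (uT : H) (τ β : ℝ) (hτ : 0 < τ) (hβ : 0 ≤ β)
    (φ : H → ℝ) (hφ : ConvexOn ℝ Set.univ φ)
    (r s θ ρ σ : ℝ) (hr : 0 < r) (hs : 0 < s) (hθ : θ ∈ Set.Ioc (0 : ℝ) 1)
    (hρ : 0 < ρ) (hσ : 0 < σ)
    (hK : IsSelfAdjoint (opK L r s θ ρ σ))
    (wstar : W H) (hstar : IsSaddle L uT τ φ wstar)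
    (wk wt wk1 : W H)
    (hVI : PredVI L uT τ φ r s θ wk wt)
    (hcorr : wk1 = wk - opD H ρ σ (wk - wt)) :
    normSq (opK L r s θ ρ σ) (wk1 - wstar)
      ≤ normSq (opK L r s θ ρ σ) (wk - wstar)
        - normSq (opN L r s θ ρ σ) (wk - wt)
        - 2 * ‖(eW H wt).2 - (eW H wstar).2‖ ^ 2
        - 2 * τ * ‖(eW H wt).1 - (eW H wstar).1‖ ^ 2 := by
  -- abbreviations are kept explicit; first the VI consequence
  have h1 := hVI wstar
  have h2 := hstar wt
  have hsum : ⟪wt - wstar, Fmap L uT τ wt - Fmap L uT τ wstar⟫_ℝ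
      + ⟪wt - wstar, opG L r s θ (wt - wk)⟫_ℝ ≤ 0 := by
    have hneg : wstar - wt = -(wt - wstar) := by abel
    rw [hneg, inner_neg_left, inner_add_right] at h1
    rw [inner_sub_right]
    linarith
  have hmain : τ * ‖wt.fst - wstar.fst‖ ^ 2 + ‖wt.snd - wstar.snd‖ ^ 2
      ≤ ⟪opG L r s θ (wk - wt), wt - wstar⟫_ℝ := by
    have hneg : wk - wt = -(wt - wk) := by abel
    rw [hneg, map_neg, real_inner_comm, inner_neg_right]
    rw [F_diff_inner] at hsum
    linarith
  have halg := contraction_algebra (opK L r s θ ρ σ) (opG L r s θ) (opD H ρ σ)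
    (opN L r s θ ρ σ) (fun w => opK_opD L r s θ ρ σ hρ.ne' hσ.ne' w) rfl
    (fun x y => hK.isSymmetric x y) (wk - wstar) (wk - wt)
  have hw : wk1 - wstar = (wk - wstar) - opD H ρ σ (wk - wt) := by rw [hcorr]; abel
  have hae : (wk - wstar) - (wk - wt) = wt - wstar := by abel
  rw [hw, halg, hae]
  have e2 : ‖(eW H wt).2 - (eW H wstar).2‖ = ‖wt.snd - wstar.snd‖ := rfl
  have e1 : ‖(eW H wt).1 - (eW H wstar).1‖ = ‖wt.fst - wstar.fst‖ := rfl
  rw [e1, e2]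
  linarith
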